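/- There exists an element z ∈ Z such that D(z) is invertible in Z. -/

import Mathlib

/-- Let `F` be a field of characteristic 3 and `Z` a commutative associative unital
`F`-algebra with a nonzero `F`-linear derivation `D` such that the only `D`-invariant
ideals of `Z` are `0` and `Z`, and `D a = 0` only for `a ∈ F·1`.  Then there exists
`z ∈ Z` such that `D z` is invertible in `Z`. -/
theorem exists_invertible_D_value
    {F : Type*} [Field F] [CharP F 3]
    {Z : Type*} [CommRing Z] [Algebra F Z]
    (D : Z →ₗ[F] Z)
    (hD : ∀ a b : Z, D (a * b) = D a * b + a * D b)
    (hD0 : D ≠ 0)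
    (hsimple : ∀ I : Ideal Z, (∀ x ∈ I, D x ∈ I) → I = ⊥ ∨ I = ⊤)
    (hker : ∀ a : Z, D a = 0 → ∃ c : F, a = algebraMap F Z c) :
    ∃ z : Z, IsUnit (D z) := by
  by_contra h
  push_neg at h
  have h3 : (3 : Z) = 0 := by
    have h' : ((3 : ℕ) : Z) = algebraMap F Z ((3 : ℕ) : F) := (map_natCast _ 3).symm
    rw [CharP.cast_eq_zero F 3, map_zero] at h'
    exact_mod_cast h'
  -- D of a cube is zero
  have cubeD : ∀ a : Z, D (a ^ 3) = 0 := by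
    intro a
    have : a ^ 3 = a * (a * a) := by ring
    rw [this, hD, hD, ]
    ring_nf
    have : D a * a ^ 2 * 3 = D a * a ^ 2 * (3 : Z) := by norm_num
    rw [show D a * a ^ 2 * 3 = (3 : Z) * (D a * a ^ 2) by ring, h3, zero_mul]
  -- every D z is nilpotent
  have cube0 : ∀ z : Z, (D z) ^ 3 = 0 := by
    intro z
    obtain ⟨c, hc⟩ := hker _ (cubeD (D z))
    by_cases hc0 : c = 0
    · rw [hc, hc0, map_zero]
    · exfalso
      apply h z
      refine IsUnit.of_mul_eq_one (algebraMap F Z c⁻¹ * (D z) ^ 2) ?_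
      have : D z * (algebraMap F Z c⁻¹ * D z ^ 2) = algebraMap F Z c⁻¹ * (D z ^ 3) := by
        ring
      rw [this, hc, ← map_mul, inv_mul_cancel₀ hc0, map_one]
  -- the ideal spanned by the range of D
  set I : Ideal Z := Ideal.span (Set.range D) with hI
  have hmem : ∀ z : Z, D z ∈ I := fun z => Ideal.subset_span ⟨z, rfl⟩
  have hinv : ∀ x ∈ I, D x ∈ I := by
    intro x hx
    refine Submodule.span_induction ?_ ?_ ?_ ?_ hx
    · rintro y ⟨z, rfl⟩
      exact hmem (D z)
    · simp
    · intro a b _ _ ha hb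
      rw [map_add]; exact I.add_mem ha hb
    · intro r a hamem ha
      have hra : r • a = r * a := rfl
      rw [hra, hD]
      exact I.add_mem (I.mul_mem_left _ hamem) (I.mul_mem_left _ ha)
  rcases hsimple I hinv with hbot | htop
  · apply hD0
    ext z
    have := hmem z
    rw [hbot] at this
    simpa using this
  · have hle : I ≤ nilradical Z := by
      rw [hI, Ideal.span_le]
      rintro x ⟨z, rfl⟩
      exact ⟨3, cube0 z⟩
    have h1 : (1 : Z) ∈ nilradical Z := hle (htop ▸ Submodule.mem_top)
    obtain ⟨n, hn⟩ := h1
    rw [one_pow] at hn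
    apply h 0
    rw [map_zero]
    exact isUnit_zero_iff.2 hn.symm
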